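/- For all real α, λ and every real x, L_μ^{(α)}(x) = M_μ^{(α,λ)} · L_μ^{(λ)}(x), where M_μ^{(α,λ)} = Σ_{k=0}^{N−1} ((α−λ)_k / k!)(−1)^k A_μ^k. In particular M_μ^{(α,λ)} = L_μ^{(α)}(0) L_μ^{(λ)}(0)^{−1}, and its entries are (M_μ^{(α,λ)})_{r,s} = (μ_r/μ_s)(α−λ)_{r−s}/(r−s)! for r ≥ s and 0 for r < s. -/

import Mathlib

open scoped BigOperators
open Matrix MeasureTheory

noncomputable section

/-- Pochhammer symbol `(a)_m = a(a+1)⋯(a+m-1)`. -/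
def poch (a : ℝ) (m : ℕ) : ℝ := ∏ i ∈ Finset.range m, (a + i)

/-- Generalized Laguerre polynomial `L_n^{(α)}(x)`. -/
def lagP (α : ℝ) (n : ℕ) (x : ℝ) : ℝ :=
  ∑ k ∈ Finset.range (n + 1),
    (-1 : ℝ) ^ k * poch (α + k + 1) (n - k) * x ^ k / ((n - k).factorial * k.factorial)

/-- The matrix `L_μ^{(α)}(x)`; the 0-based index pair `(i,j)` corresponds to the
1-based index pair `(i+1, j+1)` of the paper. -/
def LagMat (N : ℕ) (μ : Fin N → ℝ) (α : ℝ) (x : ℝ) : Matrix (Fin N) (Fin N) ℝ :=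
  Matrix.of fun m n : Fin N =>
    if (n : ℕ) ≤ (m : ℕ) then μ m / μ n * lagP (α + (n : ℕ) + 1) ((m : ℕ) - (n : ℕ)) x else 0

/-- The matrix `A_μ = S_μ A S_μ⁻¹`, written entrywise. -/
def AmuMat (N : ℕ) (μ : Fin N → ℝ) : Matrix (Fin N) (Fin N) ℝ :=
  Matrix.of fun i j : Fin N => if (i : ℕ) = (j : ℕ) + 1 then -(μ i / μ j) else 0

/-- `J = diag(1,…,N)`. -/
def Jmat (N : ℕ) : Matrix (Fin N) (Fin N) ℝ :=
  Matrix.diagonal fun i => ((i : ℕ) + 1 : ℝ)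

/-- `T^{(ν)}(x) = e^{-x} Σ_k δ_k x^{ν+k} E_{k,k}`. -/
def Tmat (N : ℕ) (δ : Fin N → ℝ) (ν : ℝ) (x : ℝ) : Matrix (Fin N) (Fin N) ℝ :=
  Matrix.diagonal fun k => Real.exp (-x) * δ k * x ^ (ν + (k : ℕ) + 1)

/-- The weight `W_μ^{(α,ν)}(x) = L_μ^{(α)}(x) T^{(ν)}(x) L_μ^{(α)}(x)^*`. -/
def Wmat (N : ℕ) (μ δ : Fin N → ℝ) (α ν : ℝ) (x : ℝ) : Matrix (Fin N) (Fin N) ℝ :=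
  LagMat N μ α x * Tmat N δ ν x * (LagMat N μ α x)ᵀ

/-- Entrywise evaluation of a matrix of polynomials. -/
def matPolyEval {N : ℕ} (P : Matrix (Fin N) (Fin N) (Polynomial ℝ)) (x : ℝ) :
    Matrix (Fin N) (Fin N) ℝ :=
  Matrix.of fun i j => (P i j).eval x

/-- Entrywise derivative of a matrix of polynomials. -/
def matPolyDeriv {N : ℕ} (P : Matrix (Fin N) (Fin N) (Polynomial ℝ)) :
    Matrix (Fin N) (Fin N) (Polynomial ℝ) :=
  Matrix.of fun i j => Polynomial.derivative (P i j)

/-- `P` is the monic (matrix valued) orthogonal polynomial of degree `n` w.r.t. the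
weight `W` on `(0,∞)`. -/
def MonicOrth (N : ℕ) (W : ℝ → Matrix (Fin N) (Fin N) ℝ) (n : ℕ)
    (P : Matrix (Fin N) (Fin N) (Polynomial ℝ)) : Prop :=
  (∀ i j, (P i j).degree ≤ n) ∧
  Matrix.of (fun i j => (P i j).coeff n) = (1 : Matrix (Fin N) (Fin N) ℝ) ∧
  ∀ k, k < n → ∀ i j, (∫ x in Set.Ioi (0 : ℝ), (matPolyEval P x * W x) i j * x ^ k) = 0

/-- Conditions (C1) and (C2) at level `ν`, relating `δ = δ^{(ν)}`, `δ' = δ^{(ν+1)}`,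
`c = c^{(ν)}` and `d = d^{(ν)}`. -/
def PearsonCond (N : ℕ) (μ δ δ' : Fin N → ℝ) (c d : ℝ) : Prop :=
  0 < c ∧ 0 < d ∧
  (∀ k : Fin N, δ' k = (((k : ℕ) + 1) * d + c) * δ k) ∧
  ∀ (k : Fin N) (h : (k : ℕ) + 1 < N),
    μ ⟨(k : ℕ) + 1, h⟩ ^ 2 / μ k ^ 2 =
      d * ((k : ℕ) + 1) * ((N : ℝ) - ((k : ℕ) + 1)) * δ ⟨(k : ℕ) + 1, h⟩ / δ' k

/-- `Φ^{(α,ν)}(x)` (with `c = c^{(ν)}`, `d = d^{(ν)}`). -/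
def PhiMat (N : ℕ) (μ : Fin N → ℝ) (α c d : ℝ) (x : ℝ) : Matrix (Fin N) (Fin N) ℝ :=
  ((LagMat N μ α 0)ᵀ)⁻¹ *
    (-(d * x ^ 2) • (AmuMat N μ)ᵀ + x • (d • Jmat N + c • (1 : Matrix (Fin N) (Fin N) ℝ))) *
    (LagMat N μ α 0)ᵀ

/-- `Ψ^{(α,ν)}(x)` (with `δ = δ^{(ν)}`, `δ' = δ^{(ν+1)}`, `c = c^{(ν)}`, `d = d^{(ν)}`). -/
def PsiMat (N : ℕ) (μ δ δ' : Fin N → ℝ) (α ν c d : ℝ) (x : ℝ) : Matrix (Fin N) (Fin N) ℝ :=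
  ((LagMat N μ α 0)ᵀ)⁻¹ *
    (x • (d • (Jmat N - (AmuMat N μ)ᵀ * (Jmat N + (ν + 1) • (1 : Matrix (Fin N) (Fin N) ℝ)) -
        ((N : ℝ) + 1) • (1 : Matrix (Fin N) (Fin N) ℝ)) - c • (1 : Matrix (Fin N) (Fin N) ℝ)) +
      (Jmat N + (ν + 1) • (1 : Matrix (Fin N) (Fin N) ℝ)) *
        (d • Jmat N + c • (1 : Matrix (Fin N) (Fin N) ℝ)) +
      (Matrix.diagonal δ)⁻¹ * AmuMat N μ * Matrix.diagonal δ') *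
    (LagMat N μ α 0)ᵀ

/-- `K_n^{(β,ν)}` (with `c = c^{(ν)}`, `d = d^{(ν)}`). -/
def Kmat (N : ℕ) (μ : Fin N → ℝ) (β ν c d : ℝ) (n : ℕ) : Matrix (Fin N) (Fin N) ℝ :=
  LagMat N μ β 0 *
    (d • (Jmat N - (Jmat N + (ν + n) • (1 : Matrix (Fin N) (Fin N) ℝ)) * AmuMat N μ -
      ((N : ℝ) + 1) • (1 : Matrix (Fin N) (Fin N) ℝ)) - c • (1 : Matrix (Fin N) (Fin N) ℝ)) *
    (LagMat N μ β 0)⁻¹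

/-- `(Q D^{(α,ν)})(x)` for a matrix valued polynomial `Q`. -/
def Dapply (N : ℕ) (μ : Fin N → ℝ) (α ν : ℝ)
    (Q : Matrix (Fin N) (Fin N) (Polynomial ℝ)) (x : ℝ) : Matrix (Fin N) (Fin N) ℝ :=
  x • matPolyEval (matPolyDeriv (matPolyDeriv Q)) x +
    matPolyEval (matPolyDeriv Q) x *
      ((-x) • (AmuMat N μ + 1)⁻¹ + (ν + 1) • (1 : Matrix (Fin N) (Fin N) ℝ) + Jmat N +
        (α • (1 : Matrix (Fin N) (Fin N) ℝ) + Jmat N) * AmuMat N μ) +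
    matPolyEval Q x * ((α - ν) • (AmuMat N μ + 1)⁻¹ - Jmat N)


/-! Auxiliary lemmas for `LagMat_parameter_connection`. -/

lemma poch_zero' (a : ℝ) : poch a 0 = 1 := by simp [poch]

lemma poch_succ' (a : ℝ) (m : ℕ) : poch a (m + 1) = poch a m * (a + m) := by
  simp [poch, Finset.prod_range_succ]

lemma poch_vd_choose (A B : ℝ) (m : ℕ) :
    ∑ i ∈ Finset.range (m + 1), (m.choose i : ℝ) * poch A (m - i) * poch B i
      = poch (A + B) m := by
  induction m with
  | zero => simp [poch_zero']
  | succ m ih =>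
    have key : ∑ i ∈ Finset.range (m + 2), ((m+1).choose i : ℝ) * poch A (m + 1 - i) * poch B i
        = (A + B + m) * ∑ i ∈ Finset.range (m + 1), (m.choose i : ℝ) * poch A (m - i) * poch B i := by
      rw [Finset.sum_range_succ']
      have h1 : ∀ i ∈ Finset.range (m + 1),
          ((m+1).choose (i+1) : ℝ) * poch A (m + 1 - (i+1)) * poch B (i+1)
          = (m.choose i : ℝ) * poch A (m - i) * poch B i * (B + i)
            + (m.choose (i+1) : ℝ) * poch A (m + 1 - (i+1)) * poch B (i+1) := by
        intro i hi
        rw [Nat.choose_succ_succ, Nat.succ_sub_succ, poch_succ']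
        push_cast
        ring
      rw [Finset.sum_congr rfl h1, Finset.sum_add_distrib]
      have h2 : ∑ i ∈ Finset.range (m+1), (m.choose (i+1) : ℝ) * poch A (m + 1 - (i+1)) * poch B (i+1)
          + ((m+1).choose 0 : ℝ) * poch A (m + 1 - 0) * poch B 0
          = ∑ i ∈ Finset.range (m+1), (m.choose i : ℝ) * poch A (m - i) * poch B i * (A + (m - i : ℕ)) := by
        have := (Finset.sum_range_succ' (fun j => (m.choose j : ℝ) * poch A (m + 1 - j) * poch B j) (m+1)).symm
        simp only [Nat.succ_sub_succ] at this ⊢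
        rw [show ((m+1).choose 0 : ℝ) * poch A (m + 1 - 0) * poch B 0
            = (m.choose 0 : ℝ) * poch A (m + 1 - 0) * poch B 0 by simp]
        rw [this, Finset.sum_range_succ]
        simp only [Nat.choose_succ_self, Nat.cast_zero, zero_mul]
        rw [add_zero]
        refine Finset.sum_congr rfl fun i hi => ?_
        have hle : i ≤ m := Nat.lt_succ_iff.mp (Finset.mem_range.mp hi)
        rw [show m + 1 - i = (m - i) + 1 by omega, poch_succ']
        ring
      rw [add_assoc, h2, ← Finset.sum_add_distrib, Finset.mul_sum]
      refine Finset.sum_congr rfl fun i hi => ?_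
      have hle : i ≤ m := Nat.lt_succ_iff.mp (Finset.mem_range.mp hi)
      have : ((m - i : ℕ) : ℝ) = (m : ℝ) - i := by
        rw [Nat.cast_sub hle]
      rw [this]; ring
    rw [key, ih, poch_succ']; ring

lemma poch_vd (A B : ℝ) (m : ℕ) :
    ∑ i ∈ Finset.range (m + 1), poch A (m - i) / (m - i).factorial * (poch B i / i.factorial)
      = poch (A + B) m / m.factorial := by
  rw [← poch_vd_choose A B m, Finset.sum_div]
  refine Finset.sum_congr rfl fun i hi => ?_
  have hle : i ≤ m := Nat.lt_succ_iff.mp (Finset.mem_range.mp hi)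
  have hc : ((m.choose i : ℕ) : ℝ) * i.factorial * (m - i).factorial = m.factorial := by
    rw [← Nat.cast_mul, ← Nat.cast_mul, Nat.choose_mul_factorial_mul_factorial hle]
  have h1 : ((m - i).factorial : ℝ) ≠ 0 := Nat.cast_ne_zero.mpr (Nat.factorial_ne_zero _)
  have h2 : (i.factorial : ℝ) ≠ 0 := Nat.cast_ne_zero.mpr (Nat.factorial_ne_zero _)
  have h3 : (m.factorial : ℝ) ≠ 0 := Nat.cast_ne_zero.mpr (Nat.factorial_ne_zero _)
  field_simp
  linear_combination (-(poch A (m - i) * poch B i)) * hc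

/-- Connection formula for generalized Laguerre polynomials. -/
lemma lagP_connection (a b x : ℝ) (n : ℕ) :
    lagP a n x = ∑ j ∈ Finset.range (n + 1),
      poch (a - b) (n - j) / (n - j).factorial * lagP b j x := by
  unfold lagP
  have hext : ∀ j ∈ Finset.range (n + 1),
      poch (a - b) (n - j) / (n - j).factorial *
        ∑ k ∈ Finset.range (j + 1), (-1:ℝ)^k * poch (b + k + 1) (j - k) * x^k / ((j-k).factorial * k.factorial)
      = ∑ k ∈ Finset.range (n + 1), (if k ≤ j then
          poch (a - b) (n - j) / (n - j).factorial *
            ((-1:ℝ)^k * poch (b + k + 1) (j - k) * x^k / ((j-k).factorial * k.factorial)) else 0) := by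
    intro j hj
    have hjn : j + 1 ≤ n + 1 := Finset.mem_range.mp hj
    rw [Finset.mul_sum]
    rw [← Finset.sum_subset (Finset.range_subset_range.mpr hjn)
      (fun k _ hk => by rw [if_neg (by simpa [Nat.lt_succ_iff] using hk)])]
    exact Finset.sum_congr rfl fun k hk => by
      rw [if_pos (Nat.lt_succ_iff.mp (Finset.mem_range.mp hk))]
  rw [Finset.sum_congr rfl hext, Finset.sum_comm]
  refine Finset.sum_congr rfl fun k hk => ?_
  have hkn : k ≤ n := Nat.lt_succ_iff.mp (Finset.mem_range.mp hk)
  have hswap : ∑ j ∈ Finset.range (n + 1), (if k ≤ j then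
          poch (a - b) (n - j) / (n - j).factorial *
            ((-1:ℝ)^k * poch (b + k + 1) (j - k) * x^k / ((j-k).factorial * k.factorial)) else 0)
      = ∑ i ∈ Finset.range (n - k + 1),
          poch (a - b) (n - (k + i)) / (n - (k + i)).factorial *
            ((-1:ℝ)^k * poch (b + k + 1) i * x^k / (i.factorial * k.factorial)) := by
    rw [← Finset.sum_filter]
    have hfil : (Finset.range (n+1)).filter (fun j => k ≤ j) = Finset.Ico k (n+1) := by
      ext j; simp [Finset.mem_filter, Finset.mem_Ico, and_comm]
    rw [hfil, Finset.sum_Ico_eq_sum_range]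
    rw [show n + 1 - k = n - k + 1 by omega]
    exact Finset.sum_congr rfl fun i hi => by rw [Nat.add_sub_cancel_left]
  rw [hswap]
  have : ∑ i ∈ Finset.range (n - k + 1),
          poch (a - b) (n - (k + i)) / (n - (k + i)).factorial *
            ((-1:ℝ)^k * poch (b + k + 1) i * x^k / (i.factorial * k.factorial))
      = ((-1:ℝ)^k * x^k / k.factorial) * ∑ i ∈ Finset.range (n - k + 1),
          poch (a - b) (n - k - i) / (n - k - i).factorial * (poch (b + k + 1) i / i.factorial) := by
    rw [Finset.mul_sum]
    refine Finset.sum_congr rfl fun i hi => ?_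
    rw [show n - (k + i) = n - k - i by omega]
    field_simp
  rw [this, poch_vd]
  rw [show a - b + (b + k + 1) = a + k + 1 by ring]
  field_simp

lemma lagP_zero_deg (b x : ℝ) : lagP b 0 x = 1 := by
  simp [lagP, poch]

lemma AmuMat_pow (N : ℕ) (μ : Fin N → ℝ) (hμ : ∀ k, μ k ≠ 0) (k : ℕ) (i j : Fin N) :
    (AmuMat N μ ^ k) i j = if (i : ℕ) = (j : ℕ) + k then (-1 : ℝ)^k * (μ i / μ j) else 0 := by
  induction k generalizing i j with
  | zero =>
    simp only [pow_zero, Matrix.one_apply, pow_zero, one_mul, add_zero]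
    rcases eq_or_ne i j with h | h
    · simp [h, div_self (hμ j)]
    · rw [if_neg h, if_neg (fun hc => h (Fin.ext hc))]
  | succ k ih =>
    rw [pow_succ, Matrix.mul_apply]
    by_cases hij : (i : ℕ) = (j : ℕ) + (k + 1)
    · have hj1 : (j : ℕ) + 1 < N := by
        have := i.isLt; omega
      set t : Fin N := ⟨(j : ℕ) + 1, hj1⟩ with ht
      rw [if_pos hij]
      rw [Finset.sum_eq_single t]
      · rw [ih, if_pos (by simp [ht]; omega)]
        show _ * (AmuMat N μ) t j = _
        rw [AmuMat, Matrix.of_apply, if_pos rfl]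
        rw [pow_succ]
        have h2 : μ i / μ t * (μ t / μ j) = μ i / μ j := by
          rw [div_mul_div_comm, mul_comm (μ t) (μ j), mul_div_mul_comm,
            div_self (hμ t), mul_one]
        calc (-1:ℝ) ^ k * (μ i / μ t) * -(μ t / μ j)
            = ((-1:ℝ)^k * -1) * (μ i / μ t * (μ t / μ j)) := by ring
          _ = (-1:ℝ)^k * -1 * (μ i / μ j) := by rw [h2]
      · intro t' _ hne
        show _ * (AmuMat N μ) t' j = 0
        rw [AmuMat, Matrix.of_apply, if_neg, mul_zero]
        intro hc
        exact hne (Fin.ext (by simp [ht, hc]))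
      · intro h; exact absurd (Finset.mem_univ t) h
    · rw [if_neg hij]
      apply Finset.sum_eq_zero
      intro t _
      by_cases h1 : (t : ℕ) = (j : ℕ) + 1
      · rw [ih, if_neg (by omega), zero_mul]
      · show _ * (AmuMat N μ) t j = 0
        rw [AmuMat, Matrix.of_apply, if_neg h1, mul_zero]

lemma Mentry (N : ℕ) (μ : Fin N → ℝ) (hμ : ∀ k, μ k ≠ 0) (α lam : ℝ)
    (r s : Fin N) :
    (∑ k ∈ Finset.range N,
      ((poch (α - lam) k / k.factorial) * (-1 : ℝ) ^ k) • AmuMat N μ ^ k) r s =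
    if (s : ℕ) ≤ (r : ℕ) then
        μ r / μ s * poch (α - lam) ((r : ℕ) - (s : ℕ)) / ((r : ℕ) - (s : ℕ)).factorial
      else 0 := by
  rw [Matrix.sum_apply]
  simp only [Matrix.smul_apply, AmuMat_pow N μ hμ, smul_eq_mul]
  by_cases hsr : (s : ℕ) ≤ (r : ℕ)
  · rw [if_pos hsr]
    rw [Finset.sum_eq_single_of_mem ((r : ℕ) - (s : ℕ))
      (Finset.mem_range.mpr (by have := r.isLt; omega))]
    · rw [if_pos (by omega)]
      have hsq : (-1 : ℝ) ^ ((r : ℕ) - (s : ℕ)) * (-1 : ℝ) ^ ((r : ℕ) - (s : ℕ)) = 1 := by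
        rw [← pow_add, ← two_mul, pow_mul]; norm_num
      set k := (r : ℕ) - (s : ℕ)
      calc poch (α - lam) k / k.factorial * (-1:ℝ) ^ k * ((-1:ℝ) ^ k * (μ r / μ s))
          = ((-1:ℝ) ^ k * (-1:ℝ) ^ k) * (poch (α - lam) k / k.factorial * (μ r / μ s)) := by ring
        _ = μ r / μ s * poch (α - lam) k / k.factorial := by rw [hsq]; ring
    · intro k _ hk
      rw [if_neg (by omega), mul_zero]
  · rw [if_neg hsr]
    apply Finset.sum_eq_zero
    intro k _
    rw [if_neg (by omega), mul_zero]

lemma LagMat_lowerTri (N : ℕ) (μ : Fin N → ℝ) (α x : ℝ) :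
    (LagMat N μ α x).BlockTriangular OrderDual.toDual := by
  intro i j hij
  have : (i : ℕ) < (j : ℕ) := hij
  rw [LagMat, Matrix.of_apply, if_neg (by omega)]

lemma LagMat_det (N : ℕ) (μ : Fin N → ℝ) (hμ : ∀ k, μ k ≠ 0) (α x : ℝ) :
    (LagMat N μ α x).det = 1 := by
  rw [Matrix.det_of_lowerTriangular _ (LagMat_lowerTri N μ α x)]
  apply Finset.prod_eq_one
  intro i _
  rw [LagMat, Matrix.of_apply, if_pos le_rfl, Nat.sub_self, lagP_zero_deg,
    div_self (hμ i), one_mul]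

lemma div_chain (a b c c1 f c2 : ℝ) (hb : b ≠ 0) :
    a / b * c1 / f * (b / c * c2) = a / c * (c1 / f * c2) := by
  have h : a / b * c1 / f * (b / c * c2) = (b / b) * (a / c * (c1 / f * c2)) := by ring
  rw [h, div_self hb, one_mul]

lemma LagMat_conn (N : ℕ) (μ : Fin N → ℝ) (hμ : ∀ k, μ k ≠ 0) (α lam x : ℝ) :
    LagMat N μ α x =
      (∑ k ∈ Finset.range N,
        ((poch (α - lam) k / k.factorial) * (-1 : ℝ) ^ k) • AmuMat N μ ^ k) *
      LagMat N μ lam x := by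
  ext m n
  rw [Matrix.mul_apply]
  have hterm : ∀ s : Fin N,
      (∑ k ∈ Finset.range N,
        ((poch (α - lam) k / k.factorial) * (-1 : ℝ) ^ k) • AmuMat N μ ^ k) m s *
        LagMat N μ lam x s n
      = (if (s:ℕ) ≤ (m:ℕ) then μ m / μ s * poch (α - lam) ((m:ℕ) - (s:ℕ)) / ((m:ℕ)-(s:ℕ)).factorial else 0) *
        (if (n:ℕ) ≤ (s:ℕ) then μ s / μ n * lagP (lam + (n:ℕ) + 1) ((s:ℕ) - (n:ℕ)) x else 0) := by
    intro s
    rw [Mentry N μ hμ α lam m s]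
    rfl
  simp only [hterm]
  by_cases hnm : (n : ℕ) ≤ (m : ℕ)
  swap
  · show LagMat N μ α x m n = _
    rw [LagMat, Matrix.of_apply, if_neg hnm]
    symm
    apply Finset.sum_eq_zero
    intro s _
    by_cases h1 : (s:ℕ) ≤ (m:ℕ)
    · rw [if_pos h1, if_neg (show ¬ (n:ℕ) ≤ (s:ℕ) by omega), mul_zero]
    · rw [if_neg h1, zero_mul]
  -- main case
  set g : ℕ → ℝ := fun t => if ht : t < N then
      (if t ≤ (m:ℕ) then μ m / μ ⟨t, ht⟩ * poch (α - lam) ((m:ℕ) - t) / ((m:ℕ) - t).factorial else 0) *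
      (if (n:ℕ) ≤ t then μ ⟨t, ht⟩ / μ n * lagP (lam + (n:ℕ) + 1) (t - (n:ℕ)) x else 0)
    else 0 with hg
  have hfin : (∑ s : Fin N,
      (if (s:ℕ) ≤ (m:ℕ) then μ m / μ s * poch (α - lam) ((m:ℕ) - (s:ℕ)) / ((m:ℕ)-(s:ℕ)).factorial else 0) *
      (if (n:ℕ) ≤ (s:ℕ) then μ s / μ n * lagP (lam + (n:ℕ) + 1) ((s:ℕ) - (n:ℕ)) x else 0))
      = ∑ t ∈ Finset.range N, g t := by
    rw [← Fin.sum_univ_eq_sum_range]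
    refine Finset.sum_congr rfl fun s _ => ?_
    simp only [hg, dif_pos s.isLt, Fin.eta]
  rw [hfin]
  have hsub : Finset.Icc (n:ℕ) (m:ℕ) ⊆ Finset.range N := by
    intro t ht
    rw [Finset.mem_Icc] at ht
    rw [Finset.mem_range]
    have := m.isLt; omega
  rw [← Finset.sum_subset hsub (fun t htr htn => by
    rw [Finset.mem_Icc] at htn
    simp only [hg]
    by_cases ht : t < N
    · rw [dif_pos ht]
      by_cases h1 : t ≤ (m:ℕ)
      · rw [if_pos h1, if_neg (show ¬ (n:ℕ) ≤ t by omega), mul_zero]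
      · rw [if_neg h1, zero_mul]
    · rw [dif_neg ht])]
  rw [← Finset.Ico_add_one_right_eq_Icc, Finset.sum_Ico_eq_sum_range]
  rw [show (m:ℕ) + 1 - (n:ℕ) = ((m:ℕ) - (n:ℕ)) + 1 by omega]
  show LagMat N μ α x m n = _
  rw [LagMat, Matrix.of_apply, if_pos hnm]
  rw [lagP_connection (α + (n:ℕ) + 1) (lam + (n:ℕ) + 1) x ((m:ℕ) - (n:ℕ))]
  rw [Finset.mul_sum]
  refine Finset.sum_congr rfl fun j hj => ?_
  have hjle : j ≤ (m:ℕ) - (n:ℕ) := Nat.lt_succ_iff.mp (Finset.mem_range.mp hj)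
  have htlt : (n:ℕ) + j < N := by have := m.isLt; omega
  simp only [hg, dif_pos htlt]
  rw [if_pos (by omega), if_pos (by omega)]
  rw [show (n:ℕ) + j - (n:ℕ) = j by omega,
    show (m:ℕ) - ((n:ℕ) + j) = (m:ℕ) - (n:ℕ) - j by omega,
    show α + ((n:ℕ):ℝ) + 1 - (lam + ((n:ℕ):ℝ) + 1) = α - lam by ring,
    div_chain _ _ _ _ _ _ (hμ ⟨(n:ℕ)+j, htlt⟩)]

/-- relation between `L_μ^{(α)}` and `L_μ^{(λ)}`. -/
theorem LagMat_parameter_connection (N : ℕ) (hN : 1 ≤ N) (μ : Fin N → ℝ)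
    (hμ : ∀ k, μ k ≠ 0) (α lam : ℝ) (M : Matrix (Fin N) (Fin N) ℝ)
    (hM : M = ∑ k ∈ Finset.range N,
      ((poch (α - lam) k / k.factorial) * (-1 : ℝ) ^ k) • AmuMat N μ ^ k) :
    (∀ x : ℝ, LagMat N μ α x = M * LagMat N μ lam x) ∧
    M = LagMat N μ α 0 * (LagMat N μ lam 0)⁻¹ ∧
    ∀ r s : Fin N, M r s =
      if (s : ℕ) ≤ (r : ℕ) then
        μ r / μ s * poch (α - lam) ((r : ℕ) - (s : ℕ)) / ((r : ℕ) - (s : ℕ)).factorial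
      else 0 := by
  subst hM
  refine ⟨fun x => LagMat_conn N μ hμ α lam x, ?_, fun r s => Mentry N μ hμ α lam r s⟩
  have hdet : IsUnit (LagMat N μ lam 0).det := by
    rw [LagMat_det N μ hμ lam 0]; exact isUnit_one
  have hinv : LagMat N μ lam 0 * (LagMat N μ lam 0)⁻¹ = 1 :=
    Matrix.mul_nonsing_inv _ hdet
  calc (∑ k ∈ Finset.range N,
      ((poch (α - lam) k / k.factorial) * (-1 : ℝ) ^ k) • AmuMat N μ ^ k)
      = (∑ k ∈ Finset.range N,
      ((poch (α - lam) k / k.factorial) * (-1 : ℝ) ^ k) • AmuMat N μ ^ k) *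
        (LagMat N μ lam 0 * (LagMat N μ lam 0)⁻¹) := by rw [hinv, mul_one]
    _ = ((∑ k ∈ Finset.range N,
      ((poch (α - lam) k / k.factorial) * (-1 : ℝ) ^ k) • AmuMat N μ ^ k) *
        LagMat N μ lam 0) * (LagMat N μ lam 0)⁻¹ := by rw [mul_assoc]
    _ = LagMat N μ α 0 * (LagMat N μ lam 0)⁻¹ := by rw [← LagMat_conn N μ hμ α lam 0]
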